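/- Let ℏ > 0 and for t ∈ ℂ define g_t(u,v) = exp(((e^{it} − 1)/(iℏ))·u·v) on ℂ² (the normal ordered expression of the star-exponential e_*^{(it/(iℏ)) u*v}; the normal ordered expression of e_*^{(it/(iℏ)) v*u} is e^{it}·g_t). Then the bumping identities hold in the normal ordered expression: v·g_t + iℏ·∂_u g_t = e^{it}·g_t·v and g_t·u + iℏ·∂_v g_t = e^{it}·u·g_t; equivalently, v *_{K₀} g_t = (e^{it}g_t) *_{K₀} v and g_t *_{K₀} u = u *_{K₀} (e^{it}g_t), which are the K₀-expressions of v * e_*^{(it/(iℏ))u*v} = e_*^{(it/(iℏ))v*u} * v and e_*^{(it/(iℏ))u*v} * u = u * e_*^{(it/(iℏ))v*u}. -/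

import Mathlib

/-- The normal ordered expression of the star-exponential `e_*^{(it/(iℏ)) u*v}`. -/
noncomputable def normalExp (ℏ : ℝ) (t u v : ℂ) : ℂ :=
  Complex.exp (((Complex.exp (Complex.I * t) - 1) / (Complex.I * ℏ)) * (u * v))

theorem statement17 (ℏ : ℝ) (hℏ : 0 < ℏ) :
    ∀ t u v : ℂ,
      (v * normalExp ℏ t u v + (Complex.I * ℏ) * deriv (fun w => normalExp ℏ t w v) u
        = Complex.exp (Complex.I * t) * normalExp ℏ t u v * v) ∧
      (normalExp ℏ t u v * u + (Complex.I * ℏ) * deriv (fun w => normalExp ℏ t u w) v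
        = Complex.exp (Complex.I * t) * u * normalExp ℏ t u v) := by
  intro t u v
  have hiℏ : (Complex.I * ℏ) ≠ 0 := by
    simp [Complex.ext_iff, hℏ.ne']
  set c : ℂ := (Complex.exp (Complex.I * t) - 1) / (Complex.I * ℏ) with hc
  have hd1 : deriv (fun w => normalExp ℏ t w v) u = (c * v) * normalExp ℏ t u v := by
    have : (fun w => normalExp ℏ t w v) = fun w => Complex.exp ((c * v) * w) := by
      funext w; simp [normalExp, hc]; ring_nf
    rw [this]
    have h := ((hasDerivAt_id u).const_mul (c * v)).cexp
    simp only [id] at h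
    rw [h.deriv]; simp [normalExp, hc]; ring_nf
  have hd2 : deriv (fun w => normalExp ℏ t u w) v = (c * u) * normalExp ℏ t u v := by
    have : (fun w => normalExp ℏ t u w) = fun w => Complex.exp ((c * u) * w) := by
      funext w; simp [normalExp, hc]; ring_nf
    rw [this]
    have h := ((hasDerivAt_id v).const_mul (c * u)).cexp
    simp only [id] at h
    rw [h.deriv]; simp [normalExp, hc]; ring_nf
  have key : (Complex.I * ℏ) * c = Complex.exp (Complex.I * t) - 1 := by
    rw [hc, mul_div_assoc', mul_comm, mul_div_assoc, div_self hiℏ, mul_one]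
  constructor
  · rw [hd1]
    have : v * normalExp ℏ t u v + Complex.I * ↑ℏ * (c * v * normalExp ℏ t u v)
        = (1 + Complex.I * ↑ℏ * c) * normalExp ℏ t u v * v := by ring
    rw [this, key]; ring
  · rw [hd2]
    have : normalExp ℏ t u v * u + Complex.I * ↑ℏ * (c * u * normalExp ℏ t u v)
        = (1 + Complex.I * ↑ℏ * c) * u * normalExp ℏ t u v := by ring
    rw [this, key]; ring
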